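/- Let 1 < p < 3 and let α : ℝ → ℝ be continuous with lim_{t→-∞} α(t) = 1/(3-p) and α(t) - 1/(3-p) = O(e^{t/2}) as t → -∞. Then there exists a unique solution μ of the Riccati equation μ' = ((5-p)/(p-1))α² - [((5-p)/(p-1))α + 1/(p-1)]μ + ((3-p)/(p-1))μ², defined on a maximal interval (-∞, T), with lim_{t→-∞} μ(t) = 1/(3-p); moreover this solution satisfies μ(t) = 1/(3-p) + O(e^{t/2}) as t → -∞. -/

import Mathlib

open Real Filter Asymptotics

/-- Right-hand side of the Riccati equation for the structural coefficient `μ`. -/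
noncomputable def riccatiRHS (p : ℝ) (α : ℝ → ℝ) (t m : ℝ) : ℝ :=
  (5 - p) / (p - 1) * (α t) ^ 2
    - ((5 - p) / (p - 1) * α t + 1 / (p - 1)) * m
    + (3 - p) / (p - 1) * m ^ 2

open Real Filter Asymptotics MeasureTheory intervalIntegral Set
open scoped NNReal Topology

private lemma intEq {k : ℝ} (hk : k ≠ 0) (y c : ℝ) :
    ∫ x in y..c, Real.exp (k * x) = k⁻¹ * (Real.exp (k * c) - Real.exp (k * y)) := by
  rw [intervalIntegral.integral_comp_mul_left (fun x => Real.exp x) hk, integral_exp]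
  simp [smul_eq_mul]

private lemma integrableOn_exp_mul_Iic' {k : ℝ} (hk : 0 < k) (c : ℝ) :
    IntegrableOn (fun x => Real.exp (k * x)) (Set.Iic c) := by
  have hcont : Continuous fun x : ℝ => Real.exp (k * x) := by continuity
  refine integrableOn_Iic_of_intervalIntegral_norm_bounded (Real.exp (k * c) / k) c
    (fun y : ℝ => hcont.integrableOn_Ioc) tendsto_id ?_
  filter_upwards with y
  simp only [id_eq]
  have : ∀ x : ℝ, ‖Real.exp (k * x)‖ = Real.exp (k * x) := fun x =>
    Real.norm_eq_abs _ ▸ abs_of_pos (Real.exp_pos _)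
  simp_rw [this, intEq hk.ne']
  rw [inv_mul_eq_div, div_le_div_iff_of_pos_right hk]
  have := Real.exp_pos (k * y); linarith

private lemma integral_exp_mul_Iic' {k : ℝ} (hk : 0 < k) (c : ℝ) :
    ∫ x in Set.Iic c, Real.exp (k * x) = Real.exp (k * c) / k := by
  refine tendsto_nhds_unique
    (intervalIntegral_tendsto_integral_Iic c (integrableOn_exp_mul_Iic' hk c) tendsto_id) ?_
  simp_rw [intEq hk.ne']
  have h1 : Tendsto (fun y : ℝ => Real.exp (k * y)) atBot (nhds 0) :=
    Real.tendsto_exp_atBot.comp (tendsto_id.const_mul_atBot hk)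
  have := ((h1.const_sub (Real.exp (k * c))).const_mul k⁻¹)
  simpa [inv_mul_eq_div, sub_zero] using this

private lemma est {lam T₀ : ℝ} (hlam : 0 < lam) {B : ℝ → ℝ}
    (hBbound : ∀ s t : ℝ, s ≤ t → t ≤ T₀ → B t - B s ≤ -(lam/2) * (t - s))
    {τ D₁ D₂ : ℝ} (hτ : τ ≤ T₀) (hD₁ : 0 ≤ D₁) (hD₂ : 0 ≤ D₂)
    {φ : ℝ → ℝ} (hφc : Continuous φ) (hBc : Continuous B)
    (hφ : ∀ s, s ≤ τ → |φ s| ≤ D₁ * Real.exp (s/2) + D₂) :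
    IntegrableOn (fun s => Real.exp (-B s) * φ s) (Set.Iic τ) ∧
    Real.exp (B τ) * |∫ s in Set.Iic τ, Real.exp (-B s) * φ s| ≤
      2*D₁/(lam+1) * Real.exp (τ/2) + 2*D₂/lam := by
  have hk₁ : (0:ℝ) < (lam+1)/2 := by linarith
  have hk₂ : (0:ℝ) < lam/2 := by linarith
  set base : ℝ := -(B τ) - (lam/2)*τ with hbase
  set dom : ℝ → ℝ := fun s =>
    (D₁ * Real.exp base) * Real.exp ((lam+1)/2 * s) + (D₂ * Real.exp base) * Real.exp (lam/2 * s)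
    with hdom
  have hdom_int : IntegrableOn dom (Set.Iic τ) :=
    (((integrableOn_exp_mul_Iic' hk₁ τ).const_mul _).add
      ((integrableOn_exp_mul_Iic' hk₂ τ).const_mul _))
  have hpt : ∀ s ∈ Set.Iic τ, ‖Real.exp (-B s) * φ s‖ ≤ dom s := by
    intro s hs
    have hBs : -B s ≤ base + lam/2 * s := by
      have := hBbound s τ hs hτ; simp only [hbase]; linarith
    have h1 : ‖Real.exp (-B s) * φ s‖ = Real.exp (-B s) * |φ s| := by
      rw [Real.norm_eq_abs, abs_mul, abs_of_pos (Real.exp_pos _)]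
    rw [h1]
    calc Real.exp (-B s) * |φ s| ≤ Real.exp (base + lam/2 * s) * (D₁ * Real.exp (s/2) + D₂) := by
          apply mul_le_mul (Real.exp_le_exp.mpr hBs) (hφ s hs) (abs_nonneg _) (Real.exp_pos _).le
      _ = dom s := by
          rw [Real.exp_add, hdom]
          have e1 : Real.exp (lam/2 * s) * Real.exp (s/2) = Real.exp ((lam+1)/2 * s) := by
            rw [← Real.exp_add]; congr 1; ring
          simp only []
          linear_combination (D₁ * Real.exp base) * e1
  have hmeas : AEStronglyMeasurable (fun s => Real.exp (-B s) * φ s)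
      (volume.restrict (Set.Iic τ)) :=
    (((Real.continuous_exp.comp hBc.neg)).mul hφc).aestronglyMeasurable
  have hint : IntegrableOn (fun s => Real.exp (-B s) * φ s) (Set.Iic τ) := by
    refine Integrable.mono' hdom_int hmeas ?_
    exact (ae_restrict_iff' measurableSet_Iic).mpr (ae_of_all _ hpt)
  refine ⟨hint, ?_⟩
  have hnorm : |∫ s in Set.Iic τ, Real.exp (-B s) * φ s| ≤ ∫ s in Set.Iic τ, dom s := by
    calc |∫ s in Set.Iic τ, Real.exp (-B s) * φ s|
        ≤ ∫ s in Set.Iic τ, ‖Real.exp (-B s) * φ s‖ := by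
          rw [← Real.norm_eq_abs]; exact norm_integral_le_integral_norm _
      _ ≤ ∫ s in Set.Iic τ, dom s := by
          refine integral_mono_of_nonneg (ae_of_all _ fun s => norm_nonneg _) hdom_int ?_
          exact (ae_restrict_iff' measurableSet_Iic).mpr (ae_of_all _ hpt)
  have hdomval : ∫ s in Set.Iic τ, dom s =
      (D₁ * Real.exp base) * (Real.exp ((lam+1)/2 * τ) / ((lam+1)/2)) +
      (D₂ * Real.exp base) * (Real.exp (lam/2 * τ) / (lam/2)) := by
    rw [hdom, integral_add (((integrableOn_exp_mul_Iic' hk₁ τ)).const_mul _)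
      (((integrableOn_exp_mul_Iic' hk₂ τ)).const_mul _),
      MeasureTheory.integral_const_mul, MeasureTheory.integral_const_mul,
      integral_exp_mul_Iic' hk₁, integral_exp_mul_Iic' hk₂]
  have e2 : Real.exp (B τ) * Real.exp base * Real.exp ((lam+1)/2 * τ) = Real.exp (τ/2) := by
    rw [← Real.exp_add, ← Real.exp_add]; congr 1; rw [hbase]; ring
  have e3 : Real.exp (B τ) * Real.exp base * Real.exp (lam/2 * τ) = 1 := by
    rw [← Real.exp_add, ← Real.exp_add, ← Real.exp_zero]; congr 1; rw [hbase]; ring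
  have hl : lam ≠ 0 := ne_of_gt hlam
  have hl1 : lam + 1 ≠ 0 := by linarith
  set E1 := Real.exp ((lam+1)/2 * τ) with hE1
  set E2 := Real.exp (lam/2 * τ) with hE2
  set EB := Real.exp (B τ) with hEB
  set Eb := Real.exp base with hEb
  set Et := Real.exp (τ/2) with hEt
  have q1 : EB * (D₁ * Eb * (E1 / ((lam+1)/2))) = 2*D₁/(lam+1) * Et := by
    rw [← e2]; field_simp
  have q2 : EB * (D₂ * Eb * (E2 / (lam/2))) = 2*D₂/lam := by
    rw [show (2*D₂/lam : ℝ) = 2*D₂/lam * 1 by ring, ← e3]; field_simp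
  calc EB * |∫ s in Set.Iic τ, Real.exp (-B s) * φ s|
      ≤ EB * ∫ s in Set.Iic τ, dom s :=
        mul_le_mul_of_nonneg_left hnorm (Real.exp_pos _).le
    _ = 2*D₁/(lam+1) * Et + 2*D₂/lam := by
        rw [hdomval, mul_add, q1, q2]

private lemma existMain {a b : ℝ → ℝ} {c lam C T₀ : ℝ}
    (hac : Continuous a) (hbc : Continuous b)
    (hc : 0 < c) (hlam : 0 < lam) (hC : 0 ≤ C)
    (hble : ∀ t ≤ T₀, b t ≤ -(lam/2))
    (hab : ∀ t ≤ T₀, |a t| ≤ C * Real.exp (t/2))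
    (hT₀ : C * Real.exp (T₀/2) ≤ (lam+1) * (lam/(8*c)) / 4) :
    ∃ ν : ℝ → ℝ,
      (∀ t, t < T₀ → HasDerivAt ν (a t + b t * ν t + c * ν t ^ 2) t) ∧
      (∀ t ≤ T₀, |ν t| ≤ (4*C/(lam+1)) * Real.exp (t/2)) := by
  set r : ℝ := lam/(8*c) with hrdef
  set K : ℝ := 4*C/(lam+1) with hKdef
  have hr : 0 < r := by positivity
  have hK : 0 ≤ K := by positivity
  -- the integrating factor
  set B : ℝ → ℝ := fun t => ∫ s in T₀..t, b s with hBdef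
  have hBderiv : ∀ t, HasDerivAt B (b t) t := fun t =>
    intervalIntegral.integral_hasDerivAt_right (hbc.intervalIntegrable _ _)
      (hbc.stronglyMeasurableAtFilter _ _) hbc.continuousAt
  have hBc : Continuous B := by
    rw [continuous_iff_continuousAt]; exact fun t => (hBderiv t).continuousAt
  have hBbound : ∀ s t : ℝ, s ≤ t → t ≤ T₀ → B t - B s ≤ -(lam/2) * (t - s) := by
    intro s t hst ht
    have h1 : B t - B s = ∫ x in s..t, b x :=
      intervalIntegral.integral_interval_sub_left (hbc.intervalIntegrable _ _)
        (hbc.intervalIntegrable _ _)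
    have h2 : (∫ x in s..t, b x) ≤ ∫ _x in s..t, -(lam/2) :=
      intervalIntegral.integral_mono_on hst (hbc.intervalIntegrable _ _)
        intervalIntegrable_const (fun x hx => hble x (le_trans hx.2 ht))
    rw [h1]
    rw [intervalIntegral.integral_const, smul_eq_mul] at h2
    linarith [h2]
  classical
  -- the closed subset of bounded continuous functions
  set A : ℝ → Set ℝ := fun t =>
    {x : ℝ | |x| ≤ r ∧ (t ≤ T₀ → |x| ≤ K * Real.exp (t/2))} with hAdef
  have hAclosed : ∀ t, IsClosed (A t) := by
    intro t
    by_cases h : t ≤ T₀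
    · have he : A t = {x : ℝ | |x| ≤ r} ∩ {x : ℝ | |x| ≤ K * Real.exp (t/2)} := by
        ext x; simp [hAdef, h]
      rw [he]
      exact (isClosed_le continuous_abs continuous_const).inter
        (isClosed_le continuous_abs continuous_const)
    · have he : A t = {x : ℝ | |x| ≤ r} := by
        ext x; simp [hAdef, h]
      rw [he]
      exact isClosed_le continuous_abs continuous_const
  set Ω : Set (BoundedContinuousFunction ℝ ℝ) := ⋂ t : ℝ, (fun ν : BoundedContinuousFunction ℝ ℝ => ν t) ⁻¹' (A t) with hΩdef
  have hΩclosed : IsClosed Ω :=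
    isClosed_iInter fun t => (hAclosed t).preimage
      (continuous_eval_const t)
  have hmemΩ : ∀ ν : BoundedContinuousFunction ℝ ℝ, ν ∈ Ω ↔
      ((∀ t, |ν t| ≤ r) ∧ ∀ t ≤ T₀, |ν t| ≤ K * Real.exp (t/2)) := by
    intro ν
    constructor
    · intro h
      simp only [hΩdef, Set.mem_iInter] at h
      exact ⟨fun t => (h t).1, fun t ht => (h t).2 ht⟩
    · intro h
      simp only [hΩdef, Set.mem_iInter]
      exact fun t => ⟨h.1 t, fun ht => h.2 t ht⟩
  have h0Ω : (0 : BoundedContinuousFunction ℝ ℝ) ∈ Ω := by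
    rw [hmemΩ]
    constructor
    · intro t; simp [hr.le]
    · intro t _; simp; positivity
  have hcr : c * r = lam / 8 := by rw [hrdef]; field_simp
  have hKC : K * (lam + 1) = 4 * C := by rw [hKdef]; field_simp
  -- the nonlinearity
  set φf : BoundedContinuousFunction ℝ ℝ → ℝ → ℝ := fun ν s => a s + c * (ν s)^2 with hφf
  have hφfc : ∀ ν, Continuous (φf ν) := fun ν =>
    hac.add (continuous_const.mul ((ν.continuous).pow 2))
  have hφbd : ∀ ν : BoundedContinuousFunction ℝ ℝ, ν ∈ Ω → ∀ s, s ≤ T₀ →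
      |φf ν s| ≤ C * Real.exp (s/2) + c * r^2 := by
    intro ν hν s hs
    rw [hmemΩ] at hν
    have h1 : |(ν s)^2| ≤ r^2 := by
      rw [abs_pow]
      exact pow_le_pow_left₀ (abs_nonneg _) (hν.1 s) 2
    calc |φf ν s| ≤ |a s| + |c * (ν s)^2| := abs_add_le _ _
      _ ≤ C * Real.exp (s/2) + c * r^2 := by
          rw [abs_mul, abs_of_pos hc]
          exact add_le_add (hab s hs) (mul_le_mul_of_nonneg_left h1 hc.le)
  have hest1 : ∀ ν : BoundedContinuousFunction ℝ ℝ, ν ∈ Ω → ∀ τ, τ ≤ T₀ →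
      IntegrableOn (fun s => Real.exp (-B s) * φf ν s) (Set.Iic τ) ∧
      Real.exp (B τ) * |∫ s in Set.Iic τ, Real.exp (-B s) * φf ν s| ≤
        2*C/(lam+1) * Real.exp (τ/2) + 2*(c*r^2)/lam :=
    fun ν hν τ hτ => est hlam hBbound hτ hC (by positivity) (hφfc ν) hBc
      (fun s hs => hφbd ν hν s (hs.trans hτ))
  -- the fixed point map (raw form)
  set Φraw : BoundedContinuousFunction ℝ ℝ → ℝ → ℝ := fun ν t =>
    Real.exp (B (min t T₀)) * ((∫ s in Set.Iic T₀, Real.exp (-B s) * φf ν s)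
      - ∫ s in (min t T₀)..T₀, Real.exp (-B s) * φf ν s) with hΦraw
  have hJeq : ∀ ν : BoundedContinuousFunction ℝ ℝ, ν ∈ Ω → ∀ w, w ≤ T₀ →
      ((∫ s in Set.Iic T₀, Real.exp (-B s) * φf ν s)
        - ∫ s in w..T₀, Real.exp (-B s) * φf ν s)
      = ∫ s in Set.Iic w, Real.exp (-B s) * φf ν s := by
    intro ν hν w hw
    have h1 := intervalIntegral.integral_Iic_sub_Iic (hest1 ν hν w hw).1 (hest1 ν hν T₀ le_rfl).1
    linarith [h1]
  have hΦabs : ∀ ν : BoundedContinuousFunction ℝ ℝ, ν ∈ Ω → ∀ t, Φraw ν t =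
      Real.exp (B (min t T₀)) * ∫ s in Set.Iic (min t T₀), Real.exp (-B s) * φf ν s := by
    intro ν hν t
    rw [hΦraw]
    simp only []
    rw [hJeq ν hν _ (min_le_right t T₀)]
  have hΦler : ∀ ν : BoundedContinuousFunction ℝ ℝ, ν ∈ Ω → ∀ t, |Φraw ν t| ≤ r := by
    intro ν hν t
    rw [hΦabs ν hν t, abs_mul, abs_of_pos (Real.exp_pos _)]
    have h1 := (hest1 ν hν _ (min_le_right t T₀)).2
    have h2 : Real.exp (min t T₀ / 2) ≤ Real.exp (T₀/2) :=
      Real.exp_le_exp.mpr (by have := min_le_right t T₀; linarith)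
    have h3 : 2*C/(lam+1) * Real.exp (min t T₀/2) ≤ 2/(lam+1) * (C * Real.exp (T₀/2)) := by
      rw [show 2*C/(lam+1) * Real.exp (min t T₀/2) = 2/(lam+1)*(C * Real.exp (min t T₀/2)) by ring]
      exact mul_le_mul_of_nonneg_left (mul_le_mul_of_nonneg_left h2 hC) (by positivity)
    have h4 : 2/(lam+1) * (C * Real.exp (T₀/2)) ≤ 2/(lam+1) * ((lam+1) * r / 4) :=
      mul_le_mul_of_nonneg_left hT₀ (by positivity)
    have h5 : 2/(lam+1) * ((lam+1) * r / 4) = r/2 := by field_simp; ring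
    have h6 : 2*(c*r^2)/lam = r/4 := by
      rw [show c*r^2 = (c*r)*r by ring, hcr]; field_simp; ring
    linarith
  have hΦdecay : ∀ ν : BoundedContinuousFunction ℝ ℝ, ν ∈ Ω → ∀ t, t ≤ T₀ →
      |Φraw ν t| ≤ K * Real.exp (t/2) := by
    intro ν hν t ht
    rw [hmemΩ] at hν
    have hφbd2 : ∀ s, s ≤ t → |φf ν s| ≤ (C + c*K*r) * Real.exp (s/2) + 0 := by
      intro s hs
      have hsT : s ≤ T₀ := hs.trans ht
      have h1 : |(ν s)^2| ≤ (K * Real.exp (s/2)) * r := by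
        rw [abs_pow, sq]
        exact mul_le_mul (hν.2 s hsT) (hν.1 s) (abs_nonneg _) (by positivity)
      calc |φf ν s| ≤ |a s| + |c * (ν s)^2| := abs_add_le _ _
        _ ≤ C * Real.exp (s/2) + c * ((K * Real.exp (s/2)) * r) := by
            rw [abs_mul, abs_of_pos hc]
            exact add_le_add (hab s hsT) (mul_le_mul_of_nonneg_left h1 hc.le)
        _ = (C + c*K*r) * Real.exp (s/2) + 0 := by ring
    have hest2 := est hlam hBbound ht (by positivity : (0:ℝ) ≤ C + c*K*r) le_rfl
      (hφfc ν) hBc hφbd2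
    have h1 := hest2.2
    rw [← hmemΩ] at hν
    rw [hΦabs ν hν t, min_eq_left ht] at *
    rw [abs_mul, abs_of_pos (Real.exp_pos _)]
    have h2 : 2*(C + c*K*r)/(lam+1) ≤ K := by
      have hcKr : c*K*r = K * (lam/8) := by rw [show c*K*r = K*(c*r) by ring, hcr]
      rw [hcKr]
      rw [div_le_iff₀ (by linarith : (0:ℝ) < lam + 1)]
      nlinarith [hK, hlam]
    calc Real.exp (B t) * |∫ s in Set.Iic t, Real.exp (-B s) * φf ν s|
        ≤ 2*(C + c*K*r)/(lam+1) * Real.exp (t/2) + 2*0/lam := h1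
      _ ≤ K * Real.exp (t/2) := by
          have h8 := mul_le_mul_of_nonneg_right h2 (Real.exp_pos (t/2)).le
          have h9 : (2:ℝ)*0/lam = 0 := by ring
          linarith
  have hΦlip : ∀ ν₁ ν₂ : BoundedContinuousFunction ℝ ℝ, ν₁ ∈ Ω → ν₂ ∈ Ω → ∀ t,
      |Φraw ν₁ t - Φraw ν₂ t| ≤ (1/2) * dist ν₁ ν₂ := by
    intro ν₁ ν₂ hν₁ hν₂ t
    set τ := min t T₀ with hτdef
    have hτ : τ ≤ T₀ := min_le_right t T₀
    have hsub : Φraw ν₁ t - Φraw ν₂ t =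
        Real.exp (B τ) * ∫ s in Set.Iic τ,
          Real.exp (-B s) * (c * ((ν₁ s)^2 - (ν₂ s)^2)) := by
      rw [hΦabs ν₁ hν₁ t, hΦabs ν₂ hν₂ t, ← mul_sub,
        ← MeasureTheory.integral_sub (hest1 ν₁ hν₁ τ hτ).1 (hest1 ν₂ hν₂ τ hτ).1]
      congr 1
      apply MeasureTheory.integral_congr_ae
      filter_upwards with s
      rw [hφf]
      ring
    have hφd : ∀ s, s ≤ τ → |c * ((ν₁ s)^2 - (ν₂ s)^2)| ≤
        0 * Real.exp (s/2) + c * (2*r) * dist ν₁ ν₂ := by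
      intro s hs
      have h1 : |(ν₁ s)^2 - (ν₂ s)^2| = |ν₁ s - ν₂ s| * |ν₁ s + ν₂ s| := by
        rw [← abs_mul]; congr 1; ring
      have h2 : |ν₁ s - ν₂ s| ≤ dist ν₁ ν₂ := by
        rw [← Real.dist_eq]; exact BoundedContinuousFunction.dist_coe_le_dist s
      have h3 : |ν₁ s + ν₂ s| ≤ 2*r := by
        rw [hmemΩ] at hν₁ hν₂
        calc |ν₁ s + ν₂ s| ≤ |ν₁ s| + |ν₂ s| := abs_add_le _ _
          _ ≤ 2*r := by linarith [hν₁.1 s, hν₂.1 s]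
      rw [abs_mul, abs_of_pos hc, h1]
      have := mul_le_mul h2 h3 (abs_nonneg _) dist_nonneg
      nlinarith [this, hc.le]
    have hest3 := est hlam hBbound hτ le_rfl
      (by positivity : (0:ℝ) ≤ c * (2*r) * dist ν₁ ν₂)
      (continuous_const.mul ((ν₁.continuous.pow 2).sub (ν₂.continuous.pow 2))) hBc hφd
    rw [hsub, abs_mul, abs_of_pos (Real.exp_pos _)]
    calc Real.exp (B τ) * |∫ s in Set.Iic τ, Real.exp (-B s) * (c * ((ν₁ s)^2 - (ν₂ s)^2))|
        ≤ 2*0/(lam+1) * Real.exp (τ/2) + 2*(c*(2*r)*dist ν₁ ν₂)/lam := hest3.2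
      _ ≤ (1/2) * dist ν₁ ν₂ := by
          have h7 : 2*(c*(2*r)*dist ν₁ ν₂)/lam = (1/2) * dist ν₁ ν₂ := by
            rw [show c*(2*r)*dist ν₁ ν₂ = (c*r)*(2*dist ν₁ ν₂) by ring, hcr]
            field_simp
            ring
          simp [h7]
  -- continuity of the map
  have hΦc : ∀ ν : BoundedContinuousFunction ℝ ℝ, Continuous (Φraw ν) := by
    intro ν
    rw [hΦraw]
    have hmin : Continuous (fun t : ℝ => min t T₀) := continuous_id.min continuous_const
    apply Continuous.mul
    · exact Real.continuous_exp.comp (hBc.comp hmin)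
    · apply Continuous.sub continuous_const
      have hintg : Continuous fun s => Real.exp (-B s) * φf ν s :=
        (Real.continuous_exp.comp hBc.neg).mul (hφfc ν)
      have hprim : Continuous (fun w => ∫ s in T₀..w, Real.exp (-B s) * φf ν s) :=
        intervalIntegral.continuous_primitive (fun a b => hintg.intervalIntegrable a b) T₀
      have : (fun w => ∫ s in w..T₀, Real.exp (-B s) * φf ν s)
          = fun w => -∫ s in T₀..w, Real.exp (-B s) * φf ν s := by
        funext w; rw [intervalIntegral.integral_symm]
      rw [show (fun t : ℝ => ∫ s in (min t T₀)..T₀, Real.exp (-B s) * φf ν s)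
          = (fun w => ∫ s in w..T₀, Real.exp (-B s) * φf ν s) ∘ (fun t => min t T₀) from rfl,
        this]
      exact (hprim.neg).comp hmin
  -- the self-map of Ω
  set Φ : Ω → Ω := fun νp =>
    ⟨BoundedContinuousFunction.ofNormedAddCommGroup (Φraw νp.1) (hΦc νp.1) r
      (fun t => by rw [Real.norm_eq_abs]; exact hΦler νp.1 νp.2 t), by
        rw [hmemΩ]
        constructor
        · intro t
          simpa using hΦler νp.1 νp.2 t
        · intro t ht
          simpa using hΦdecay νp.1 νp.2 t ht⟩ with hΦ
  haveI : Nonempty Ω := ⟨⟨0, h0Ω⟩⟩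
  haveI : CompleteSpace Ω := hΩclosed.completeSpace_coe
  have hCW : ContractingWith (1/2 : ℝ≥0) Φ := by
    constructor
    · rw [← NNReal.coe_lt_coe]; norm_num
    · apply LipschitzWith.of_dist_le_mul
      intro x y
      rw [Subtype.dist_eq]
      have hhalf : ((1/2 : ℝ≥0) : ℝ) = 1/2 := by norm_num
      rw [hΦ]
      refine (BoundedContinuousFunction.dist_le (by positivity)).mpr ?_
      intro t
      simp only [BoundedContinuousFunction.coe_ofNormedAddCommGroup, Real.dist_eq, hhalf]
      exact hΦlip x.1 y.1 x.2 y.2 t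
  set νB := ContractingWith.fixedPoint Φ hCW with hνB
  have hfix : Φ νB = νB := hCW.fixedPoint_isFixedPt
  have heq : ∀ t, Φraw νB.1 t = νB.1 t := by
    intro t
    conv_rhs => rw [← hfix]
    rw [hΦ]
    simp
  have hνmem : νB.1 ∈ Ω := νB.2
  rw [hmemΩ] at hνmem
  refine ⟨fun t => νB.1 t, ?_, ?_⟩
  · -- the ODE
    intro t ht
    have hintg : Continuous fun s => Real.exp (-B s) * φf νB.1 s :=
      (Real.continuous_exp.comp hBc.neg).mul (hφfc νB.1)
    have hJd : HasDerivAt (fun u => (∫ s in Set.Iic T₀, Real.exp (-B s) * φf νB.1 s)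
        - ∫ s in u..T₀, Real.exp (-B s) * φf νB.1 s)
        (Real.exp (-B t) * φf νB.1 t) t := by
      have h1 : HasDerivAt (fun u => ∫ s in u..T₀, Real.exp (-B s) * φf νB.1 s)
          (-(Real.exp (-B t) * φf νB.1 t)) t :=
        intervalIntegral.integral_hasDerivAt_left (hintg.intervalIntegrable _ _)
          (hintg.stronglyMeasurableAtFilter _ _) hintg.continuousAt
      simpa using h1.const_sub _
    have hexp : HasDerivAt (fun u => Real.exp (B u)) (Real.exp (B t) * b t) t :=
      (hBderiv t).exp
    have hF : HasDerivAt (fun u => Real.exp (B u) *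
        ((∫ s in Set.Iic T₀, Real.exp (-B s) * φf νB.1 s)
          - ∫ s in u..T₀, Real.exp (-B s) * φf νB.1 s))
        (Real.exp (B t) * b t * ((∫ s in Set.Iic T₀, Real.exp (-B s) * φf νB.1 s)
          - ∫ s in t..T₀, Real.exp (-B s) * φf νB.1 s)
         + Real.exp (B t) * (Real.exp (-B t) * φf νB.1 t)) t := hexp.mul hJd
    have hev : (fun u => νB.1 u) =ᶠ[nhds t] (fun u => Real.exp (B u) *
        ((∫ s in Set.Iic T₀, Real.exp (-B s) * φf νB.1 s)
          - ∫ s in u..T₀, Real.exp (-B s) * φf νB.1 s)) := by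
      filter_upwards [Iio_mem_nhds ht] with u hu
      rw [← heq u, hΦraw]
      simp only [min_eq_left (le_of_lt (Set.mem_Iio.mp hu))]
    have hννt : Real.exp (B t) * ((∫ s in Set.Iic T₀, Real.exp (-B s) * φf νB.1 s)
        - ∫ s in t..T₀, Real.exp (-B s) * φf νB.1 s) = νB.1 t := by
      rw [← heq t, hΦraw]
      simp only [min_eq_left (le_of_lt ht)]
    have hee : Real.exp (B t) * Real.exp (-B t) = 1 := by
      rw [← Real.exp_add]; simp
    have hD : Real.exp (B t) * b t * ((∫ s in Set.Iic T₀, Real.exp (-B s) * φf νB.1 s)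
          - ∫ s in t..T₀, Real.exp (-B s) * φf νB.1 s)
         + Real.exp (B t) * (Real.exp (-B t) * φf νB.1 t)
        = a t + b t * νB.1 t + c * (νB.1 t) ^ 2 := by
      have hφft : φf νB.1 t = a t + c * (νB.1 t)^2 := by rw [hφf]
      linear_combination (b t) * hννt + (φf νB.1 t) * hee + hφft
    have := hF.congr_of_eventuallyEq hev
    rw [hD] at this
    exact this
  · intro t ht
    exact hνmem.2 t ht

/-- Existence (on some interval `(-∞, T)`) and uniqueness of the ancient solution
`μ` of the Riccati equation with `μ(t) → 1/(3-p)` as `t → -∞`; moreover the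
solution satisfies `μ(t) = 1/(3-p) + O(e^{t/2})` as `t → -∞`. -/
theorem stmt_19 (p : ℝ) (hp1 : 1 < p) (hp3 : p < 3) (α : ℝ → ℝ)
    (hα_cont : Continuous α)
    (hα_lim : Tendsto α atBot (nhds (1 / (3 - p))))
    (hα_rate : (fun t => α t - 1 / (3 - p)) =O[atBot] fun t => Real.exp (t / 2)) :
    (∃ T : ℝ, ∃ μ : ℝ → ℝ,
      (∀ t < T, HasDerivAt μ (riccatiRHS p α t (μ t)) t) ∧
      Tendsto μ atBot (nhds (1 / (3 - p))) ∧
      (fun t => μ t - 1 / (3 - p)) =O[atBot] fun t => Real.exp (t / 2)) ∧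
    (∀ T₁ T₂ : ℝ, ∀ μ₁ μ₂ : ℝ → ℝ,
      (∀ t < T₁, HasDerivAt μ₁ (riccatiRHS p α t (μ₁ t)) t) →
      Tendsto μ₁ atBot (nhds (1 / (3 - p))) →
      (∀ t < T₂, HasDerivAt μ₂ (riccatiRHS p α t (μ₂ t)) t) →
      Tendsto μ₂ atBot (nhds (1 / (3 - p))) →
      ∀ t < min T₁ T₂, μ₁ t = μ₂ t) := by
  have hp1' : p - 1 ≠ 0 := by linarith
  have h3p : (0:ℝ) < 3 - p := by linarith
  have h3p' : (3:ℝ) - p ≠ 0 := by linarith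
  have hp1pos : (0:ℝ) < p - 1 := by linarith
  have h5p : (0:ℝ) < 5 - p := by linarith
  set L : ℝ := 1 / (3 - p) with hLdef
  set c : ℝ := (3 - p) / (p - 1) with hcdef
  set lam : ℝ := 2 / ((p - 1) * (3 - p)) with hlamdef
  have hc : 0 < c := by rw [hcdef]; positivity
  have hlam : 0 < lam := by rw [hlamdef]; positivity
  set af : ℝ → ℝ := fun t => (5 - p) / (p - 1) * (α t - L) * α t with hafdef
  set bf : ℝ → ℝ := fun t => 1 / (p - 1) - (5 - p) / (p - 1) * α t with hbfdef
  have riccatiId : ∀ x m, riccatiRHS p α x (L + m) = af x + bf x * m + c * m ^ 2 := by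
    intro x m
    simp only [riccatiRHS, hafdef, hbfdef, hcdef, hLdef]
    field_simp
    ring
  constructor
  · -- EXISTENCE
    have hafc : Continuous af := by
      rw [hafdef]; exact (continuous_const.mul (hα_cont.sub continuous_const)).mul hα_cont
    have hbfc : Continuous bf := by
      rw [hbfdef]; exact continuous_const.sub (continuous_const.mul hα_cont)
    have hbf_lim : Tendsto bf atBot (nhds (-lam)) := by
      have h1 : Tendsto bf atBot (nhds (1 / (p - 1) - (5 - p) / (p - 1) * L)) := by
        rw [hbfdef]
        exact tendsto_const_nhds.sub (hα_lim.const_mul _)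
      have h2 : 1 / (p - 1) - (5 - p) / (p - 1) * L = -lam := by
        rw [hLdef, hlamdef]; field_simp; ring
      rwa [h2] at h1
    have hbf_ev : ∀ᶠ t in atBot, bf t ≤ -(lam / 2) :=
      hbf_lim.eventually (eventually_le_nhds (by linarith))
    have haf_O : af =O[atBot] fun t => Real.exp (t / 2) := by
      have h1 : (fun t => (α t - L) * α t) =O[atBot]
          (fun t => Real.exp (t / 2) * 1) := hα_rate.mul (hα_lim.isBigO_one ℝ)
      simp only [mul_one] at h1
      have h2 := h1.const_mul_left ((5 - p) / (p - 1))
      apply h2.congr_left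
      intro t; rw [hafdef]; ring
    obtain ⟨C, hCpos, hCbd⟩ := haf_O.exists_pos
    rw [Asymptotics.isBigOWith_iff] at hCbd
    have hCbd' : ∀ᶠ t in atBot, |af t| ≤ C * Real.exp (t / 2) := by
      filter_upwards [hCbd] with t h
      rwa [Real.norm_eq_abs, Real.norm_eq_abs, abs_of_pos (Real.exp_pos _)] at h
    have hT0ev : ∀ᶠ t in atBot, C * Real.exp (t / 2) ≤ (lam + 1) * (lam / (8 * c)) / 4 := by
      have hdiv : Tendsto (fun t : ℝ => t / 2) atBot atBot := by
        apply Filter.tendsto_atBot_atBot.mpr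
        intro y; exact ⟨2 * y, fun x hx => by linarith⟩
      have h1 : Tendsto (fun t : ℝ => C * Real.exp (t / 2)) atBot (nhds (C * 0)) :=
        (Real.tendsto_exp_atBot.comp hdiv).const_mul C
      rw [mul_zero] at h1
      exact h1.eventually (eventually_le_nhds (by positivity))
    obtain ⟨T₀, hT₀all⟩ := eventually_atBot.mp ((hbf_ev.and (hCbd'.and hT0ev)))
    obtain ⟨ν, hνd, hνdecay⟩ := existMain hafc hbfc hc hlam hCpos.le
      (fun t ht => (hT₀all t ht).1) (fun t ht => (hT₀all t ht).2.1)
      ((hT₀all T₀ le_rfl).2.2)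
    have hνlim : Tendsto ν atBot (nhds 0) := by
      apply squeeze_zero_norm' (a := fun t => 4 * C / (lam + 1) * Real.exp (t / 2))
      · filter_upwards [eventually_le_atBot T₀] with t ht
        rw [Real.norm_eq_abs]; exact hνdecay t ht
      · have hdiv : Tendsto (fun t : ℝ => t / 2) atBot atBot := by
          apply Filter.tendsto_atBot_atBot.mpr
          intro y; exact ⟨2 * y, fun x hx => by linarith⟩
        have h1 : Tendsto (fun t : ℝ => 4 * C / (lam + 1) * Real.exp (t / 2)) atBot
            (nhds (4 * C / (lam + 1) * 0)) :=
          (Real.tendsto_exp_atBot.comp hdiv).const_mul _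
        rwa [mul_zero] at h1
    refine ⟨T₀, fun t => L + ν t, ?_, ?_, ?_⟩
    · intro t ht
      have h1 := (hνd t ht).const_add L
      rwa [← riccatiId t (ν t)] at h1
    · have := tendsto_const_nhds.add hνlim (f := fun _ : ℝ => L) (x := atBot)
      rwa [add_zero] at this
    · rw [Asymptotics.isBigO_iff]
      refine ⟨4 * C / (lam + 1), ?_⟩
      filter_upwards [eventually_le_atBot T₀] with t ht
      rw [Real.norm_eq_abs, Real.norm_eq_abs, abs_of_pos (Real.exp_pos _)]
      simpa [add_sub_cancel_left] using hνdecay t ht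
  · -- UNIQUENESS
    intro T₁ T₂ μ₁ μ₂ hd₁ hl₁ hd₂ hl₂
    set g : ℝ → ℝ := fun s =>
      -((5 - p) / (p - 1) * α s + 1 / (p - 1)) + c * (μ₁ s + μ₂ s) with hgdef
    have hμ₁ca : ∀ u, u < T₁ → ContinuousAt μ₁ u := fun u hu => (hd₁ u hu).continuousAt
    have hμ₂ca : ∀ u, u < T₂ → ContinuousAt μ₂ u := fun u hu => (hd₂ u hu).continuousAt
    have hgca : ∀ u, u < min T₁ T₂ → ContinuousAt g u := by
      intro u hu
      rw [lt_min_iff] at hu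
      rw [hgdef]
      exact (((hα_cont.continuousAt.const_mul _).add continuousAt_const).neg).add
        (((hμ₁ca u hu.1).add (hμ₂ca u hu.2)).const_mul c)
    have hg_lim : Tendsto g atBot (nhds (-lam)) := by
      have h1 : Tendsto g atBot
          (nhds (-((5 - p) / (p - 1) * L + 1 / (p - 1)) + c * (L + L))) := by
        rw [hgdef]
        exact (((hα_lim.const_mul _).add tendsto_const_nhds).neg).add
          ((hl₁.add hl₂).const_mul c)
      have h2 : -((5 - p) / (p - 1) * L + 1 / (p - 1)) + c * (L + L) = -lam := by
        rw [hLdef, hlamdef, hcdef]; field_simp; ring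
      rwa [h2] at h1
    obtain ⟨t₂, ht₂all⟩ := eventually_atBot.mp
      ((hg_lim.eventually (eventually_le_nhds (by linarith : -lam < 0))).and
        (eventually_lt_atBot (min T₁ T₂)))
    have ht₂min : t₂ < min T₁ T₂ := (ht₂all t₂ le_rfl).2
    have hg0 : ∀ s, s ≤ t₂ → g s ≤ 0 := fun s hs => (ht₂all s hs).1
    set w : ℝ → ℝ := fun s => μ₁ s - μ₂ s with hwdef
    have hw' : ∀ u, u < min T₁ T₂ → HasDerivAt w (g u * w u) u := by
      intro u hu
      rw [lt_min_iff] at hu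
      have h1 := (hd₁ u hu.1).sub (hd₂ u hu.2)
      have h2 : riccatiRHS p α u (μ₁ u) - riccatiRHS p α u (μ₂ u) = g u * w u := by
        simp only [riccatiRHS, hgdef, hwdef]; ring
      rw [h2] at h1
      exact h1
    have hgcont : ContinuousOn g (Set.Iio (min T₁ T₂)) :=
      fun x hx => (hgca x hx).continuousWithinAt
    have hgint : ∀ u v : ℝ, u ≤ v → v ≤ t₂ → IntervalIntegrable g volume u v := by
      intro u v huv hv
      apply ContinuousOn.intervalIntegrable
      apply hgcont.mono
      intro x hx
      rw [Set.uIcc_of_le huv] at hx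
      exact lt_of_le_of_lt (hx.2.trans hv) ht₂min
    set G : ℝ → ℝ := fun u => ∫ s in t₂..u, g s with hGdef
    have hGd : ∀ u, u < min T₁ T₂ → HasDerivAt G (g u) u := by
      intro u hu
      apply intervalIntegral.integral_hasDerivAt_right
      · rcases le_total t₂ u with h | h
        · apply ContinuousOn.intervalIntegrable
          apply hgcont.mono
          intro x hx
          rw [Set.uIcc_of_le h] at hx
          exact lt_of_le_of_lt hx.2 hu
        · exact (hgint u t₂ h le_rfl).symm
      · exact ContinuousOn.stronglyMeasurableAtFilter isOpen_Iio hgcont u (Set.mem_Iio.mpr hu)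
      · exact hgca u hu
    have hconst : ∀ s, s ≤ t₂ → w t₂ * Real.exp (-G t₂) = w s * Real.exp (-G s) := by
      intro s hs
      have key := constant_of_has_deriv_right_zero
        (f := fun u => w u * Real.exp (-G u)) (a := s) (b := t₂) ?_ ?_
      · exact key t₂ ⟨hs, le_rfl⟩
      · intro x hx
        have hxlt : x < min T₁ T₂ := lt_of_le_of_lt hx.2 ht₂min
        exact (((hw' x hxlt).mul (((hGd x hxlt).neg).exp)).continuousAt).continuousWithinAt
      · intro x hx
        have hxlt : x < min T₁ T₂ := lt_trans hx.2 ht₂min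
        have hd : HasDerivAt (fun u => w u * Real.exp (-G u))
            (g x * w x * Real.exp (-G x) + w x * (Real.exp (-G x) * -g x)) x :=
          (hw' x hxlt).mul (((hGd x hxlt).neg).exp)
        have hz : g x * w x * Real.exp (-G x) + w x * (Real.exp (-G x) * -g x) = 0 := by ring
        rw [hz] at hd
        exact hd.hasDerivWithinAt
    have hGt₂ : G t₂ = 0 := intervalIntegral.integral_same
    have hwle : ∀ s, s ≤ t₂ → |w t₂| ≤ |w s| := by
      intro s hs
      have h1 := hconst s hs
      rw [hGt₂, neg_zero, Real.exp_zero, mul_one] at h1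
      have h2 : -G s ≤ 0 := by
        have h3 : G s = -∫ u in s..t₂, g u := by
          rw [hGdef]; exact intervalIntegral.integral_symm s t₂
        have h4 : (∫ u in s..t₂, g u) ≤ ∫ _u in s..t₂, (0:ℝ) :=
          intervalIntegral.integral_mono_on hs (hgint s t₂ hs le_rfl)
            intervalIntegrable_const (fun x hx => hg0 x hx.2)
        simp only [intervalIntegral.integral_zero] at h4
        rw [h3]; linarith
      rw [h1, abs_mul, abs_of_pos (Real.exp_pos _)]
      calc |w s| * Real.exp (-G s) ≤ |w s| * 1 :=
            mul_le_mul_of_nonneg_left (Real.exp_le_one_iff.mpr h2) (abs_nonneg _)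
        _ = |w s| := mul_one _
    have hwlim : Tendsto (fun s => |w s|) atBot (nhds 0) := by
      have h1 : Tendsto w atBot (nhds (L - L)) := hl₁.sub hl₂
      rw [sub_self] at h1
      have h2 := h1.abs
      rwa [abs_zero] at h2
    have hwt₂ : w t₂ = 0 := by
      have h1 : |w t₂| ≤ 0 := ge_of_tendsto hwlim (eventually_atBot.mpr ⟨t₂, hwle⟩)
      exact abs_eq_zero.mp (le_antisymm h1 (abs_nonneg _))
    have hwzero : ∀ s, s ≤ t₂ → w s = 0 := by
      intro s hs
      have h1 := (hconst s hs).symm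
      rw [hwt₂, zero_mul] at h1
      rcases mul_eq_zero.mp h1 with h | h
      · exact h
      · exact absurd h (ne_of_gt (Real.exp_pos _))
    intro t ht
    rcases le_or_gt t t₂ with hcase | hcase
    · exact sub_eq_zero.mp (hwzero t hcase)
    · -- forward uniqueness on [t₂, t] via Grönwall
      have hIccsub : ∀ x ∈ Set.Icc t₂ t, x < min T₁ T₂ := fun x hx => lt_of_le_of_lt hx.2 ht
      obtain ⟨Cα, hCα⟩ := IsCompact.exists_bound_of_continuousOn isCompact_Icc
        (hα_cont.continuousOn : ContinuousOn α (Set.Icc t₂ t))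
      have hμ₁cont : ContinuousOn μ₁ (Set.Icc t₂ t) := fun x hx =>
        (hμ₁ca x ((hIccsub x hx).trans_le (min_le_left _ _))).continuousWithinAt
      have hμ₂cont : ContinuousOn μ₂ (Set.Icc t₂ t) := fun x hx =>
        (hμ₂ca x ((hIccsub x hx).trans_le (min_le_right _ _))).continuousWithinAt
      obtain ⟨R₁, hR₁⟩ := isCompact_Icc.exists_bound_of_continuousOn hμ₁cont
      obtain ⟨R₂, hR₂⟩ := isCompact_Icc.exists_bound_of_continuousOn hμ₂cont
      set R : ℝ := max R₁ R₂ with hRdef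
      have ht₂mem : t₂ ∈ Set.Icc t₂ t := ⟨le_rfl, hcase.le⟩
      have hR0 : 0 ≤ R := le_trans (norm_nonneg (μ₁ t₂))
        (le_trans (hR₁ t₂ ht₂mem) (le_max_left _ _))
      have hR1' : ∀ x ∈ Set.Icc t₂ t, |μ₁ x| ≤ R := fun x hx =>
        le_trans (hR₁ x hx) (le_max_left _ _)
      have hR2' : ∀ x ∈ Set.Icc t₂ t, |μ₂ x| ≤ R := fun x hx =>
        le_trans (hR₂ x hx) (le_max_right _ _)
      have hCα0 : 0 ≤ Cα := le_trans (norm_nonneg (α t₂)) (hCα t₂ ht₂mem)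
      set Kl : ℝ := (5 - p) / (p - 1) * Cα + 1 / (p - 1) + 2 * c * R with hKldef
      have h5p1 : 0 ≤ (5 - p) / (p - 1) := div_nonneg h5p.le hp1pos.le
      have hKl0 : 0 ≤ Kl := by
        rw [hKldef]
        have h1 : 0 ≤ (5 - p) / (p - 1) * Cα := mul_nonneg h5p1 hCα0
        have h2 : 0 ≤ 1 / (p - 1) := by positivity
        have h3 : 0 ≤ 2 * c * R := by positivity
        linarith
      set v : ℝ → ℝ → ℝ := fun τ m => riccatiRHS p α (max t₂ (min τ t)) m with hvdef
      have hproj : ∀ τ ∈ Set.Ico t₂ t, max t₂ (min τ t) = τ := fun τ hτ => by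
        rw [min_eq_left hτ.2.le, max_eq_right hτ.1]
      have hprojmem : ∀ τ : ℝ, max t₂ (min τ t) ∈ Set.Icc t₂ t := fun τ =>
        ⟨le_max_left _ _, max_le hcase.le (min_le_right _ _)⟩
      have hv : ∀ τ, LipschitzOnWith Kl.toNNReal (v τ) (Metric.closedBall 0 R) := by
        intro τ
        rw [lipschitzOnWith_iff_dist_le_mul]
        intro x hx y hy
        rw [Metric.mem_closedBall, Real.dist_eq, sub_zero] at hx hy
        rw [Real.dist_eq, Real.dist_eq]
        set τ' := max t₂ (min τ t) with hτ'def
        have hval : v τ x - v τ y =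
            (-((5 - p) / (p - 1) * α τ' + 1 / (p - 1)) + c * (x + y)) * (x - y) := by
          simp only [hvdef, riccatiRHS, hcdef]
          ring
        have hbnd : |(-((5 - p) / (p - 1) * α τ' + 1 / (p - 1)) + c * (x + y))| ≤ Kl := by
          have hα' : |α τ'| ≤ Cα := hCα τ' (hprojmem τ)
          have hxy : |x + y| ≤ 2 * R := by
            calc |x + y| ≤ |x| + |y| := abs_add_le _ _
              _ ≤ 2 * R := by linarith
          calc |(-((5 - p) / (p - 1) * α τ' + 1 / (p - 1)) + c * (x + y))|
              ≤ |(5 - p) / (p - 1) * α τ' + 1 / (p - 1)| + |c * (x + y)| := by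
                rw [show (-((5 - p) / (p - 1) * α τ' + 1 / (p - 1)) + c * (x + y))
                  = (c * (x + y)) - ((5 - p) / (p - 1) * α τ' + 1 / (p - 1)) by ring]
                exact (abs_sub _ _).trans (by rw [add_comm])
            _ ≤ ((5 - p) / (p - 1) * Cα + 1 / (p - 1)) + c * (2 * R) := by
                have h1 : |(5 - p) / (p - 1) * α τ' + 1 / (p - 1)| ≤
                    (5 - p) / (p - 1) * Cα + 1 / (p - 1) := by
                  calc |(5 - p) / (p - 1) * α τ' + 1 / (p - 1)|
                      ≤ |(5 - p) / (p - 1) * α τ'| + |1 / (p - 1)| := abs_add_le _ _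
                    _ ≤ (5 - p) / (p - 1) * Cα + 1 / (p - 1) := by
                        rw [abs_mul, abs_of_nonneg h5p1, abs_of_nonneg (by positivity :
                          (0:ℝ) ≤ 1 / (p - 1))]
                        exact add_le_add (mul_le_mul_of_nonneg_left hα' h5p1) le_rfl
                have h2 : |c * (x + y)| ≤ c * (2 * R) := by
                  rw [abs_mul, abs_of_pos hc]
                  exact mul_le_mul_of_nonneg_left hxy hc.le
                linarith
            _ ≤ Kl := by rw [hKldef]; linarith
        calc |v τ x - v τ y| = |(-((5 - p) / (p - 1) * α τ' + 1 / (p - 1)) + c * (x + y))|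
              * |x - y| := by rw [hval, abs_mul]
          _ ≤ Kl * |x - y| := mul_le_mul_of_nonneg_right hbnd (abs_nonneg _)
          _ = (Kl.toNNReal : ℝ) * |x - y| := by rw [Real.coe_toNNReal _ hKl0]
      have hEq := ODE_solution_unique_of_mem_Icc_right (v := v)
        (s := fun _ => Metric.closedBall (0:ℝ) R) (K := Kl.toNNReal)
        (fun τ _ => hv τ) hμ₁cont ?_ ?_ hμ₂cont ?_ ?_ (sub_eq_zero.mp (hwzero t₂ le_rfl))
      · exact hEq ⟨hcase.le, le_rfl⟩
      · intro τ hτ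
        have hτ1 : τ < T₁ := ((hIccsub τ (Set.Ico_subset_Icc_self hτ)).trans_le (min_le_left _ _))
        have h := hd₁ τ hτ1
        have hvτ : v τ (μ₁ τ) = riccatiRHS p α τ (μ₁ τ) := by
          simp only [hvdef]; rw [hproj τ hτ]
        rw [← hvτ] at h
        exact h.hasDerivWithinAt
      · intro τ hτ
        rw [Metric.mem_closedBall, Real.dist_eq, sub_zero]
        exact hR1' τ (Set.Ico_subset_Icc_self hτ)
      · intro τ hτ
        have hτ2 : τ < T₂ := ((hIccsub τ (Set.Ico_subset_Icc_self hτ)).trans_le (min_le_right _ _))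
        have h := hd₂ τ hτ2
        have hvτ : v τ (μ₂ τ) = riccatiRHS p α τ (μ₂ τ) := by
          simp only [hvdef]; rw [hproj τ hτ]
        rw [← hvτ] at h
        exact h.hasDerivWithinAt
      · intro τ hτ
        rw [Metric.mem_closedBall, Real.dist_eq, sub_zero]
        exact hR2' τ (Set.Ico_subset_Icc_self hτ)
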